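/- Under the hypotheses of the additive Schwarz theory (stable decomposition constant C₀ and a coloring with n colors), the additive Schwarz operator P = Σᵢ Pᵢ is symmetric positive definite with respect to the a-inner product, and its spectral condition number κ(P) = λ_max(P)/λ_min(P) satisfies κ(P) ≤ n C₀. -/

import Mathlib

private lemma cs_aux {V : Type*} [AddCommGroup V] [Module ℝ V]
    (a : V →ₗ[ℝ] V →ₗ[ℝ] ℝ)
    (hsymm : ∀ u v, a u v = a v u) (hnn : ∀ v, 0 ≤ a v v) (u w : V) :
    (a u w) ^ 2 ≤ a u u * a w w := by
  have h : ∀ t : ℝ, 0 ≤ a w w * (t * t) + 2 * a u w * t + a u u := by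
    intro t
    have h0 := hnn (u + t • w)
    have he : a (u + t • w) (u + t • w)
        = a w w * (t * t) + 2 * a u w * t + a u u := by
      simp only [map_add, map_smul, LinearMap.add_apply, LinearMap.smul_apply, smul_eq_mul]
      rw [hsymm w u]; ring
    rw [he] at h0
    exact h0
  have hd := discrim_le_zero h
  rw [discrim] at hd
  nlinarith

theorem stmt3 {V : Type*} [AddCommGroup V] [Module ℝ V] [FiniteDimensional ℝ V]
    (a : V →ₗ[ℝ] V →ₗ[ℝ] ℝ)
    (hsymm : ∀ u v, a u v = a v u)
    (hpos : ∀ v : V, v ≠ 0 → 0 < a v v)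
    (N : ℕ) (Vs : Fin (N + 1) → Submodule ℝ V)
    (hspan : (⨆ i, Vs i) = ⊤)
    (Pi : Fin (N + 1) → V →ₗ[ℝ] V)
    (hPi_mem : ∀ i v, Pi i v ∈ Vs i)
    (hPi_proj : ∀ i v, ∀ w ∈ Vs i, a (Pi i v) w = a v w)
    (P : V →ₗ[ℝ] V) (hP : P = ∑ i, Pi i)
    (C₀ : ℝ)
    (hdec : ∀ v : V, ∃ vi : Fin (N + 1) → V, (∀ i, vi i ∈ Vs i) ∧ v = ∑ i, vi i ∧
      ∑ i, a (vi i) (vi i) ≤ C₀ * a v v)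
    (n : ℕ) (c : Fin (N + 1) → Fin n)
    (hcolor : ∀ i j, i ≠ j → c i = c j →
      ∀ u ∈ Vs i, ∀ w ∈ Vs j, a u w = 0) :
    -- P is symmetric w.r.t. the a-inner product
    (∀ u v : V, a (P u) v = a u (P v)) ∧
    -- P is positive definite w.r.t. the a-inner product
    (∀ v : V, v ≠ 0 → 0 < a (P v) v) ∧
    -- the ratio of any two eigenvalues of P is at most n * C₀,
    -- in particular κ(P) = λ_max / λ_min ≤ n C₀
    (∀ (μ₁ μ₂ : ℝ) (v₁ v₂ : V), v₁ ≠ 0 → v₂ ≠ 0 →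
      P v₁ = μ₁ • v₁ → P v₂ = μ₂ • v₂ → μ₁ / μ₂ ≤ (n : ℝ) * C₀) := by
  have hnn : ∀ v, 0 ≤ a v v := by
    intro v
    rcases eq_or_ne v 0 with rfl | hv
    · simp
    · exact (hpos v hv).le
  -- each Pi is a-symmetric
  have hsymPi : ∀ i (u v : V), a (Pi i u) v = a u (Pi i v) := by
    intro i u v
    calc a (Pi i u) v = a v (Pi i u) := hsymm _ _
      _ = a (Pi i v) (Pi i u) := (hPi_proj i v (Pi i u) (hPi_mem i u)).symm
      _ = a (Pi i u) (Pi i v) := hsymm _ _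
      _ = a u (Pi i v) := hPi_proj i u (Pi i v) (hPi_mem i v)
  have hPiself : ∀ i (v : V), a (Pi i v) v = a (Pi i v) (Pi i v) := by
    intro i v
    rw [hPi_proj i v (Pi i v) (hPi_mem i v), hsymm]
  have hPsum : ∀ v w : V, a (P v) w = ∑ i, a (Pi i v) w := by
    intro v w
    simp [hP, LinearMap.sum_apply, map_sum]
  have hPvv : ∀ v : V, a (P v) v = ∑ i, a (Pi i v) (Pi i v) := by
    intro v
    rw [hPsum]
    exact Finset.sum_congr rfl fun i _ => hPiself i v
  -- lower bound from the stable decomposition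
  have hlow : ∀ v : V, (a v v) ^ 2 ≤ (∑ i, a (Pi i v) (Pi i v)) * (C₀ * a v v) := by
    intro v
    obtain ⟨vi, hm, hsum, hb⟩ := hdec v
    set r : Fin (N + 1) → ℝ :=
      fun i => Real.sqrt (a (Pi i v) (Pi i v) * a (vi i) (vi i)) with hr
    have hkey : a v v = ∑ i, a (Pi i v) (vi i) := by
      calc a v v = a v (∑ i, vi i) := by rw [← hsum]
        _ = ∑ i, a v (vi i) := by rw [map_sum]
        _ = ∑ i, a (Pi i v) (vi i) :=
          Finset.sum_congr rfl fun i _ => (hPi_proj i v (vi i) (hm i)).symm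
    have h1 : a v v ≤ ∑ i, r i := by
      rw [hkey]
      refine Finset.sum_le_sum fun i _ => ?_
      have hcs := cs_aux a hsymm hnn (Pi i v) (vi i)
      calc a (Pi i v) (vi i) ≤ Real.sqrt ((a (Pi i v) (vi i)) ^ 2) := by
            rw [Real.sqrt_sq_eq_abs]; exact le_abs_self _
        _ ≤ r i := Real.sqrt_le_sqrt hcs
    have h2 : (∑ i, r i) ^ 2 ≤
        (∑ i, a (Pi i v) (Pi i v)) * (∑ i, a (vi i) (vi i)) :=
      Finset.sum_sq_le_sum_mul_sum_of_sq_eq_mul _ (fun i _ => hnn _) (fun i _ => hnn _)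
        (fun i _ => Real.sq_sqrt (mul_nonneg (hnn _) (hnn _)))
    have h3 : (a v v) ^ 2 ≤ (∑ i, r i) ^ 2 := pow_le_pow_left₀ (hnn v) h1 2
    have hPnn : 0 ≤ ∑ i, a (Pi i v) (Pi i v) := Finset.sum_nonneg fun i _ => hnn _
    have h4 := mul_le_mul_of_nonneg_left hb hPnn
    linarith
  -- upper bound from the coloring
  have hup : ∀ v : V, (∑ i, a (Pi i v) (Pi i v)) ≤ (n : ℝ) * a v v := by
    intro v
    rw [← Finset.sum_fiberwise Finset.univ c (fun i => a (Pi i v) (Pi i v))]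
    have hcol : ∀ k : Fin n,
        (∑ i ∈ Finset.univ.filter (fun i => c i = k), a (Pi i v) (Pi i v)) ≤ a v v := by
      intro k
      set F := Finset.univ.filter (fun i => c i = k) with hF
      set S := ∑ i ∈ F, a (Pi i v) (Pi i v) with hS
      set w := ∑ i ∈ F, Pi i v with hw
      have hci : ∀ i ∈ F, c i = k := by
        intro i hi
        simpa [hF] using hi
      have hww : a w w = S := by
        have hd : a w w = ∑ i ∈ F, ∑ j ∈ F, a (Pi i v) (Pi j v) := by
          simp only [hw, map_sum, LinearMap.sum_apply]
          rw [Finset.sum_comm]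
        rw [hd, hS]
        refine Finset.sum_congr rfl fun i hi => ?_
        refine Finset.sum_eq_single i (fun j hj hji => ?_) (fun h => absurd hi h)
        exact hcolor i j (Ne.symm hji) ((hci i hi).trans (hci j hj).symm)
          (Pi i v) (hPi_mem i v) (Pi j v) (hPi_mem j v)
      have hwv : a w v = S := by
        have : a w v = ∑ i ∈ F, a (Pi i v) v := by
          simp [hw, map_sum, LinearMap.sum_apply]
        rw [this, hS]
        exact Finset.sum_congr rfl fun i _ => hPiself i v
      have hcs := cs_aux a hsymm hnn w v
      rw [hwv, hww] at hcs
      have hSnn : 0 ≤ S := by rw [← hww]; exact hnn w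
      rcases (hSnn.eq_or_lt.imp Eq.symm id) with h0 | h0
      · rw [h0]; exact hnn v
      · nlinarith
    calc (∑ k : Fin n, ∑ i ∈ Finset.univ.filter (fun i => c i = k),
          a (Pi i v) (Pi i v)) ≤ ∑ _k : Fin n, a v v :=
          Finset.sum_le_sum fun k _ => hcol k
      _ = (n : ℝ) * a v v := by
          simp [Finset.sum_const, nsmul_eq_mul]
  -- positive definiteness
  have hpd : ∀ v : V, v ≠ 0 → 0 < a (P v) v := by
    intro v hv
    rw [hPvv]
    have hl := hlow v
    have hSnn : 0 ≤ ∑ i, a (Pi i v) (Pi i v) := Finset.sum_nonneg fun i _ => hnn _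
    rcases (hSnn.eq_or_lt.imp Eq.symm id) with h0 | h0
    · exfalso
      rw [h0, zero_mul] at hl
      nlinarith [hpos v hv]
    · exact h0
  refine ⟨?_, hpd, ?_⟩
  · intro u v
    rw [hPsum]
    have : a u (P v) = ∑ i, a u (Pi i v) := by
      simp [hP, LinearMap.sum_apply, map_sum]
    rw [this]
    exact Finset.sum_congr rfl fun i _ => hsymPi i u v
  · intro μ₁ μ₂ v₁ v₂ h1 h2 he1 he2
    have hA1 : 0 < a v₁ v₁ := hpos _ h1
    have hA2 : 0 < a v₂ v₂ := hpos _ h2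
    have hPv1 : a (P v₁) v₁ = μ₁ * a v₁ v₁ := by
      rw [he1, map_smul]; simp
    have hPv2 : a (P v₂) v₂ = μ₂ * a v₂ v₂ := by
      rw [he2, map_smul]; simp
    -- μ₁ ≤ n
    have hμ1n : μ₁ ≤ (n : ℝ) := by
      have hu := hup v₁
      rw [← hPvv, hPv1] at hu
      exact le_of_mul_le_mul_right hu hA1
    -- 0 < μ₁
    have hμ1pos : 0 < μ₁ := by
      have := hpd v₁ h1
      rw [hPv1] at this
      nlinarith
    -- 1 ≤ μ₂ * C₀
    have hμ2C : 1 ≤ μ₂ * C₀ := by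
      have hl := hlow v₂
      rw [← hPvv, hPv2] at hl
      nlinarith [mul_pos hA2 hA2]
    -- C₀ ≥ 0
    have hC0nn : 0 ≤ C₀ := by
      obtain ⟨vi, hm, -, hb⟩ := hdec v₂
      have : (0 : ℝ) ≤ C₀ * a v₂ v₂ :=
        le_trans (Finset.sum_nonneg fun i _ => hnn _) hb
      nlinarith
    have hC0pos : 0 < C₀ := by
      rcases (hC0nn.eq_or_lt.imp Eq.symm id) with h0 | h0
      · exfalso; rw [h0, mul_zero] at hμ2C; linarith
      · exact h0
    have hμ2pos : 0 < μ₂ := by nlinarith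
    rw [div_le_iff₀ hμ2pos]
    have hnnn : (0 : ℝ) ≤ (n : ℝ) := Nat.cast_nonneg n
    nlinarith
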